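/- Let J(ζ) = λ(ζ)φ'(ζ) + J^⊥(ζ) be a holomorphic vector field along a complex geodesic φ : 𝔻 → D of a strongly convex domain, where λ(ζ) = α + iβζ - ᾱζ², α ∈ ℂ, β ∈ ℝ, and φ̃(ζ)·J^⊥(ζ) ≡ 0 on 𝔻 with φ̃ the dual map of φ normalized so that φ̃(ζ)·φ'(ζ) ≡ 1. If Re α = 0 and J(1) = 0, then J(ζ) = iγ(1-ζ)²φ'(ζ) + J^⊥(ζ) for some γ ∈ ℝ with J^⊥(1) = 0, and consequently Re(φ̃(r)·J(r)) = 0 for all r ∈ (-1,1). -/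

import Mathlib

open Metric Filter Set Topology

/-- The bilinear (non-Hermitian) dot product `a·b = Σ aᵢbᵢ` on `ℂⁿ`. -/
noncomputable def dotc {n : ℕ} (a b : EuclideanSpace ℂ (Fin n)) : ℂ := ∑ i, a i * b i

lemma dotc_smul_add {n : ℕ} (a b d : EuclideanSpace ℂ (Fin n)) (c : ℂ) :
    dotc a (c • b + d) = c * dotc a b + dotc a d := by
  simp only [dotc, Finset.mul_sum, ← Finset.sum_add_distrib]
  apply Finset.sum_congr rfl
  intro i _
  have hadd : (c • b + d) i = c * b i + d i := rfl
  rw [hadd]; ring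

/-- Structure of Jacobi fields along a complex geodesic: if
`J = λφ' + J^⊥` with `λ(ζ) = α + iβζ - ᾱζ²`, `φ̃·J^⊥ ≡ 0`, `φ̃·φ' ≡ 1`, `Re α = 0` and
`J(1) = 0`, then `λ(ζ) = iγ(1-ζ)²` for some real `γ`, `J^⊥(1) = 0`, and
`Re(φ̃(r)·J(r)) = 0` for all `r ∈ (-1,1)`. -/
theorem stmt12 {n : ℕ}
    (φ φd φt Jp J : ℂ → EuclideanSpace ℂ (Fin n)) (α : ℂ) (β : ℝ) (lam : ℂ → ℂ)
    (hlam : ∀ ζ : ℂ, lam ζ = α + Complex.I * β * ζ - (starRingEnd ℂ) α * ζ ^ 2)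
    (hφdiff : DifferentiableOn ℂ φ (ball (0:ℂ) 1))
    (hφtdiff : DifferentiableOn ℂ φt (ball (0:ℂ) 1))
    (hφtcont : ContinuousOn φt (closedBall (0:ℂ) 1))
    (hJpdiff : DifferentiableOn ℂ Jp (ball (0:ℂ) 1))
    (hJpcont : ContinuousOn Jp (closedBall (0:ℂ) 1))
    (hderiv : ∀ ζ ∈ closedBall (0:ℂ) 1, HasDerivWithinAt φ (φd ζ) (closedBall (0:ℂ) 1) ζ)
    (hdual : ∀ ζ ∈ closedBall (0:ℂ) 1, dotc (φt ζ) (φd ζ) = 1)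
    (hperp : ∀ ζ ∈ closedBall (0:ℂ) 1, dotc (φt ζ) (Jp ζ) = 0)
    (hα : α.re = 0)
    (hJ : ∀ ζ : ℂ, J ζ = lam ζ • φd ζ + Jp ζ)
    (hJ1 : J 1 = 0) :
    ∃ γ : ℝ, (∀ ζ : ℂ, lam ζ = Complex.I * γ * (1 - ζ) ^ 2) ∧ Jp 1 = 0 ∧
      ∀ r : ℝ, r ∈ Ioo (-1 : ℝ) 1 → (dotc (φt (r : ℂ)) (J (r : ℂ))).re = 0 := by
  have h1mem : (1 : ℂ) ∈ closedBall (0:ℂ) 1 := by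
    simp [mem_closedBall, Complex.dist_eq]
  -- dotc φt(1) (J 1) = lam 1
  have hdJ1 : dotc (φt 1) (J 1) = lam 1 := by
    rw [hJ 1, dotc_smul_add, hdual 1 h1mem, hperp 1 h1mem]; ring
  have hlam1 : lam 1 = 0 := by
    rw [← hdJ1, hJ1]; simp [dotc]
  -- α = I * α.im
  have hαeq : α = Complex.I * (α.im : ℂ) := by
    apply Complex.ext <;> simp [hα]
  -- from lam 1 = 0 : β = -2 α.im
  have hβ : (β : ℂ) = -2 * (α.im : ℂ) := by
    have := hlam1
    rw [hlam 1] at this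
    rw [hαeq] at this
    simp only [map_mul, Complex.conj_I, Complex.conj_ofReal] at this
    have h2 : Complex.I * ((α.im : ℂ) + β + (α.im : ℂ)) = 0 := by
      rw [← this]; ring
    have h3 : ((α.im : ℂ) + β + (α.im : ℂ)) = 0 := by
      have := mul_eq_zero.mp h2
      rcases this with h | h
      · exact absurd h Complex.I_ne_zero
      · exact h
    linear_combination h3
  refine ⟨α.im, ?_, ?_, ?_⟩
  · intro ζ
    have hconj : (starRingEnd ℂ) α = -(Complex.I * (α.im : ℂ)) := by
      rw [hαeq]; simp
    rw [hlam ζ]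
    linear_combination hαeq + Complex.I * ζ * hβ - ζ ^ 2 * hconj
  · have := hJ1
    rw [hJ 1, hlam1] at this
    simpa using this
  · intro r hr
    have habs : |r| ≤ 1 := by
      rw [abs_le]; exact ⟨le_of_lt hr.1, le_of_lt hr.2⟩
    have hrmem : (r : ℂ) ∈ closedBall (0:ℂ) 1 := by
      simp [mem_closedBall, Complex.dist_eq, Complex.norm_real, habs]
    have : dotc (φt (r:ℂ)) (J (r:ℂ)) = lam (r:ℂ) := by
      rw [hJ (r:ℂ), dotc_smul_add, hdual _ hrmem, hperp _ hrmem]; ring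
    rw [this, hlam (r:ℂ), hαeq]
    simp only [map_mul, Complex.conj_I, Complex.conj_ofReal]
    rw [hβ]
    have : Complex.I * (α.im : ℂ) + Complex.I * (-2 * (α.im : ℂ)) * (r:ℂ) -
        -Complex.I * (α.im : ℂ) * (r:ℂ) ^ 2 =
        Complex.I * ((α.im * (1 - 2*r + r^2) : ℝ) : ℂ) := by
      push_cast; ring
    rw [this, Complex.mul_re]
    simp only [Complex.I_re, Complex.I_im, Complex.ofReal_im, zero_mul, one_mul, mul_zero]
    ring
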